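/- With notation as before (ν with ⟨ν,α⟩ > 0, 0 ≤ k ≤ ⟨ν,α⟩, μ = ν − k·α̌, ℓ(v) = Σ_{β∈Σ⁺}|⟨v,β⟩|), the equality ℓ(ν) = ℓ(μ) + 2·min{k, ⟨ν,α⟩ − k} holds if and only if k = 0, or k = ⟨ν,α⟩, or there exists w in the Weyl group W such that w(ν) is dominant and w(α) is a simple root. -/

import Mathlib

open Module

variable {V : Type} [AddCommGroup V] [Module ℝ V]

/-- A reduced crystallographic root system in the dual of `V`, with a chosen
positive system. -/
structure RootSystemData (V : Type) [AddCommGroup V] [Module ℝ V] where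
  roots : Finset (Module.Dual ℝ V)
  coroot : Module.Dual ℝ V → V
  pos : Finset (Module.Dual ℝ V)
  root_ne_zero : ∀ α ∈ roots, α ≠ 0
  coroot_self : ∀ α ∈ roots, α (coroot α) = 2
  reflection_mem : ∀ α ∈ roots, ∀ β ∈ roots, β - β (coroot α) • α ∈ roots
  crystallographic : ∀ α ∈ roots, ∀ β ∈ roots, ∃ n : ℤ, β (coroot α) = (n : ℝ)
  reduced : ∀ α ∈ roots, ∀ t : ℝ, t • α ∈ roots → t = 1 ∨ t = -1
  pos_subset : pos ⊆ roots
  pos_or_neg : ∀ α ∈ roots, α ∈ pos ∨ -α ∈ pos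
  pos_not_neg : ∀ α ∈ pos, -α ∉ pos
  pos_add : ∀ α ∈ pos, ∀ β ∈ pos, α + β ∈ roots → α + β ∈ pos

/-- The contragredient action of a linear automorphism of `V` on the dual space:
`(w β)(v) = β (w⁻¹ v)`. -/
noncomputable def dualAct (w : V ≃ₗ[ℝ] V) (β : Module.Dual ℝ V) : Module.Dual ℝ V :=
  β.comp w.symm.toLinearMap

namespace RootSystemData

variable (D : RootSystemData V)

/-- `ℓ(v) = Σ_{β ∈ Σ⁺} |⟨v, β⟩|`, the length of the translation by `v`. -/
noncomputable def coLen (v : V) : ℝ := ∑ β ∈ D.pos, |β v|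

/-- The reflection `s_α` acting on `V`, as a linear automorphism. -/
noncomputable def reflV (α : Module.Dual ℝ V) (h : α (D.coroot α) = 2) : V ≃ₗ[ℝ] V where
  toFun := fun v => v - α v • D.coroot α
  map_add' := by intro x y; simp only [map_add, add_smul]; abel
  map_smul' := by intro r x; simp only [map_smul, smul_eq_mul, RingHom.id_apply, smul_sub,
    smul_smul]
  invFun := fun v => v - α v • D.coroot α
  left_inv := by
    intro v
    simp only [map_sub, map_smul, smul_eq_mul, h]
    have : α v - α v * 2 = -(α v) := by ring
    rw [this, neg_smul, sub_neg_eq_add, sub_add_cancel]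
  right_inv := by
    intro v
    simp only [map_sub, map_smul, smul_eq_mul, h]
    have : α v - α v * 2 = -(α v) := by ring
    rw [this, neg_smul, sub_neg_eq_add, sub_add_cancel]

/-- The reflection attached to a root. -/
noncomputable def sRef (α : Module.Dual ℝ V) (h : α ∈ D.roots) : V ≃ₗ[ℝ] V :=
  D.reflV α (D.coroot_self α h)

/-- The Weyl group, as the subgroup of `GL(V)` generated by the reflections in the roots. -/
noncomputable def weylGroup : Subgroup (V ≃ₗ[ℝ] V) :=
  Subgroup.closure {e | ∃ α, ∃ h : α ∈ D.roots, e = D.sRef α h}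

open scoped Classical in
/-- The length of a Weyl group element: the number of positive roots made negative. -/
noncomputable def lenW (w : V ≃ₗ[ℝ] V) : ℕ :=
  (D.pos.filter fun β => dualAct w β ∉ D.pos).card

/-- The Bruhat order, via the standard characterization: the reflexive-transitive
closure of the relation `x < t x` whenever `t` is a reflection and `ℓ(x) < ℓ(t x)`. -/
def bruhatLE (x y : V ≃ₗ[ℝ] V) : Prop :=
  Relation.ReflTransGen
    (fun u v => D.lenW u < D.lenW v ∧ ∃ α, ∃ h : α ∈ D.roots, v = D.sRef α h * u) x y

/-- Strict Bruhat order. -/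
def bruhatLT (x y : V ≃ₗ[ℝ] V) : Prop := D.bruhatLE x y ∧ x ≠ y

/-- A simple (positive) root: a positive root which is not the sum of two positive roots. -/
def IsSimpleRoot (α : Module.Dual ℝ V) : Prop :=
  α ∈ D.pos ∧ ¬ ∃ β ∈ D.pos, ∃ γ ∈ D.pos, α = β + γ

/-- The set `Δ_w = {α ∈ Δ : w(α) > 0}`. -/
def DeltaW (w : V ≃ₗ[ℝ] V) : Set (Module.Dual ℝ V) :=
  {α | D.IsSimpleRoot α ∧ dualAct w α ∈ D.pos}

/-- The parabolic subgroup `W_Θ` generated by the reflections in the roots belonging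
to `Θ`. -/
noncomputable def parabolic (Θ : Set (Module.Dual ℝ V)) : Subgroup (V ≃ₗ[ℝ] V) :=
  Subgroup.closure {e | ∃ α, ∃ h : α ∈ D.roots, α ∈ Θ ∧ e = D.sRef α h}

/-- A dominant coweight. -/
def IsDominant (v : V) : Prop := ∀ β ∈ D.pos, 0 ≤ β v

end RootSystemData

namespace RootSystemData

variable {V : Type} [AddCommGroup V] [Module ℝ V] (D : RootSystemData V)

lemma sRef_apply {α : Module.Dual ℝ V} (h : α ∈ D.roots) (v : V) :
    D.sRef α h v = v - α v • D.coroot α := rfl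

lemma sRef_symm_apply {α : Module.Dual ℝ V} (h : α ∈ D.roots) (v : V) :
    (D.sRef α h).symm v = v - α v • D.coroot α := rfl

lemma dualAct_sRef {α : Module.Dual ℝ V} (h : α ∈ D.roots) (β : Module.Dual ℝ V) :
    dualAct (D.sRef α h) β = β - β (D.coroot α) • α := by
  ext v
  simp only [dualAct, LinearMap.comp_apply, LinearEquiv.coe_toLinearMap, sRef_symm_apply,
    map_sub, map_smul, smul_eq_mul, LinearMap.sub_apply, LinearMap.smul_apply]
  ring

lemma sRef_sRef {α : Module.Dual ℝ V} (h : α ∈ D.roots) (v : V) :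
    D.sRef α h (D.sRef α h v) = v := by
  have : D.sRef α h (D.sRef α h v) = (D.sRef α h).symm (D.sRef α h v) := rfl
  rw [this, LinearEquiv.symm_apply_apply]

lemma sRef_mul_self {α : Module.Dual ℝ V} (h : α ∈ D.roots) :
    D.sRef α h * D.sRef α h = 1 := by
  ext v
  exact D.sRef_sRef h v

lemma sRef_inv {α : Module.Dual ℝ V} (h : α ∈ D.roots) :
    (D.sRef α h)⁻¹ = D.sRef α h :=
  inv_eq_of_mul_eq_one_right (D.sRef_mul_self h)

lemma sRef_mem_weylGroup {α : Module.Dual ℝ V} (h : α ∈ D.roots) :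
    D.sRef α h ∈ D.weylGroup :=
  Subgroup.subset_closure ⟨α, h, rfl⟩

end RootSystemData

section dualActLemmas

variable {V : Type} [AddCommGroup V] [Module ℝ V]

lemma dualAct_one (β : Module.Dual ℝ V) : dualAct (1 : V ≃ₗ[ℝ] V) β = β := rfl

lemma dualAct_mul (w w' : V ≃ₗ[ℝ] V) (β : Module.Dual ℝ V) :
    dualAct (w * w') β = dualAct w (dualAct w' β) := rfl

lemma dualAct_apply (w : V ≃ₗ[ℝ] V) (β : Module.Dual ℝ V) (v : V) :
    dualAct w β (w v) = β v := by
  simp [dualAct]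

lemma dualAct_inv_dualAct (w : V ≃ₗ[ℝ] V) (β : Module.Dual ℝ V) :
    dualAct w⁻¹ (dualAct w β) = β := by
  rw [← dualAct_mul, inv_mul_cancel, dualAct_one]

lemma dualAct_dualAct_inv (w : V ≃ₗ[ℝ] V) (β : Module.Dual ℝ V) :
    dualAct w (dualAct w⁻¹ β) = β := by
  rw [← dualAct_mul, mul_inv_cancel, dualAct_one]

lemma dualAct_injective (w : V ≃ₗ[ℝ] V) : Function.Injective (dualAct w) := by
  intro a b hab
  have := congrArg (dualAct w⁻¹) hab
  rwa [dualAct_inv_dualAct, dualAct_inv_dualAct] at this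

lemma dualAct_neg (w : V ≃ₗ[ℝ] V) (β : Module.Dual ℝ V) :
    dualAct w (-β) = -dualAct w β := by
  ext v; simp [dualAct]

lemma dualAct_smul (w : V ≃ₗ[ℝ] V) (t : ℝ) (β : Module.Dual ℝ V) :
    dualAct w (t • β) = t • dualAct w β := by
  ext v; simp [dualAct]

end dualActLemmas

namespace RootSystemData

variable {V : Type} [AddCommGroup V] [Module ℝ V] (D : RootSystemData V)

lemma neg_mem_roots {β : Module.Dual ℝ V} (h : β ∈ D.roots) : -β ∈ D.roots := by
  have h2 := D.reflection_mem β h β h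
  rw [D.coroot_self β h] at h2
  have : β - (2 : ℝ) • β = -β := by
    rw [two_smul]; abel
  rwa [this] at h2

lemma weyl_maps_roots {w : V ≃ₗ[ℝ] V} (hw : w ∈ D.weylGroup) :
    ∀ β ∈ D.roots, dualAct w β ∈ D.roots := by
  have key : ∀ β ∈ D.roots, dualAct w β ∈ D.roots ∧ dualAct w⁻¹ β ∈ D.roots := by
    refine Subgroup.closure_induction
      (p := fun x _ => ∀ β ∈ D.roots, dualAct x β ∈ D.roots ∧ dualAct x⁻¹ β ∈ D.roots)
      ?_ ?_ ?_ ?_ hw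
    · rintro x ⟨α, hα, rfl⟩ β hβ
      rw [D.sRef_inv hα]
      have : dualAct (D.sRef α hα) β ∈ D.roots := by
        rw [D.dualAct_sRef hα]
        exact D.reflection_mem α hα β hβ
      exact ⟨this, this⟩
    · intro β hβ
      rw [inv_one]
      exact ⟨hβ, hβ⟩
    · intro x y _ _ hx hy β hβ
      constructor
      · rw [dualAct_mul]
        exact (hx _ ((hy β hβ).1)).1
      · rw [mul_inv_rev, dualAct_mul]
        exact (hy _ ((hx β hβ).2)).2
    · intro x _ hx β hβ
      rw [inv_inv]
      exact ⟨(hx β hβ).2, (hx β hβ).1⟩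
  exact fun β hβ => (key β hβ).1

lemma not_proportional {β γ : Module.Dual ℝ V} (hβ : β ∈ D.roots) (hγ : γ ∈ D.roots)
    (h1 : β ≠ γ) (h2 : β ≠ -γ) : ∀ t : ℝ, β ≠ t • γ := by
  intro t ht
  rcases D.reduced γ hγ t (by rwa [← ht]) with h | h
  · rw [h, one_smul] at ht; exact h1 ht
  · rw [h] at ht
    exact h2 (by rw [ht]; module)

lemma indep_coeffs {β γ : Module.Dual ℝ V} (hβ : β ∈ D.roots) (hγ : γ ∈ D.roots)
    (h1 : β ≠ γ) (h2 : β ≠ -γ) {x y x' y' : ℝ}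
    (h : x • β + y • γ = x' • β + y' • γ) : x = x' ∧ y = y' := by
  by_cases hxx : x = x'
  · subst hxx
    have : (y - y') • γ = 0 := by
      have h0 := sub_eq_zero.mpr h
      rw [show x • β + y • γ - (x • β + y' • γ) = (y - y') • γ by module] at h0
      exact h0
    rcases smul_eq_zero.mp this with h' | h'
    · exact ⟨rfl, by linarith [sub_eq_zero.mp (by linarith [h'] : y - y' = (0:ℝ))]⟩
    · exact absurd h' (D.root_ne_zero γ hγ)
  · exfalso
    have hne : x - x' ≠ 0 := sub_ne_zero.mpr hxx
    apply D.not_proportional hβ hγ h1 h2 ((y' - y) / (x - x'))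
    have hb : (x - x') • β = (y' - y) • γ := by
      have := sub_eq_zero.mpr h
      rw [show x • β + y • γ - (x' • β + y' • γ) = (x - x') • β - (y' - y) • γ by module] at this
      exact sub_eq_zero.mp this
    calc β = (x - x')⁻¹ • ((x - x') • β) := by rw [inv_smul_smul₀ hne]
    _ = (x - x')⁻¹ • ((y' - y) • γ) := by rw [hb]
    _ = ((y' - y) / (x - x')) • γ := by rw [smul_smul]; ring_nf

end RootSystemData
section dualActLemmas2

variable {V : Type} [AddCommGroup V] [Module ℝ V]

lemma dualAct_sub (w : V ≃ₗ[ℝ] V) (β γ : Module.Dual ℝ V) :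
    dualAct w (β - γ) = dualAct w β - dualAct w γ := by
  ext v; simp [dualAct]

lemma dualAct_add (w : V ≃ₗ[ℝ] V) (β γ : Module.Dual ℝ V) :
    dualAct w (β + γ) = dualAct w β + dualAct w γ := by
  ext v; simp [dualAct]

lemma dualAct_inv_apply (w : V ≃ₗ[ℝ] V) (β : Module.Dual ℝ V) (v : V) :
    dualAct w⁻¹ β v = β (w v) := by
  have h1 : dualAct w⁻¹ β (w⁻¹ (w v)) = β (w v) := dualAct_apply w⁻¹ β (w v)
  have h2 : w⁻¹ (w v) = v := by
    have : (w⁻¹ * w) v = v := by rw [inv_mul_cancel]; rfl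
    exact this
  rwa [h2] at h1

end dualActLemmas2

namespace RootSystemData

variable {V : Type} [AddCommGroup V] [Module ℝ V] (D : RootSystemData V)

lemma pairing_unique {β : Module.Dual ℝ V} (hβ : β ∈ D.roots) (c₁ c₂ : V)
    (h1 : β c₁ = 2) (h2 : β c₂ = 2)
    (r1 : ∀ ε ∈ D.roots, ε - ε c₁ • β ∈ D.roots)
    (r2 : ∀ ε ∈ D.roots, ε - ε c₂ • β ∈ D.roots) :
    ∀ ε ∈ D.roots, ε c₁ = ε c₂ := by
  intro ε hε
  by_contra hne
  set d : ℝ := ε c₂ - ε c₁ with hd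
  have hdne : d ≠ 0 := sub_ne_zero.mpr (Ne.symm hne)
  have step : ∀ φ ∈ D.roots, φ + (φ c₂ - φ c₁) • β ∈ D.roots := by
    intro φ hφ
    have m1 := r2 φ hφ
    have m2 := r1 _ m1
    have key : (φ - φ c₂ • β) - ((φ - φ c₂ • β) c₁) • β = φ + (φ c₂ - φ c₁) • β := by
      have hc : (φ - φ c₂ • β) c₁ = φ c₁ - φ c₂ * 2 := by
        simp [h1]
      rw [hc]
      module
    rwa [key] at m2
  have iter : ∀ n : ℕ, ε + ((n : ℝ) * d) • β ∈ D.roots := by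
    intro n
    induction n with
    | zero => simpa using hε
    | succ n ih =>
        have h3 := step _ ih
        have hc2 : (ε + ((n : ℝ) * d) • β) c₂ - (ε + ((n : ℝ) * d) • β) c₁ = d := by
          simp only [LinearMap.add_apply, LinearMap.smul_apply, smul_eq_mul, h1, h2]
          ring
        rw [hc2] at h3
        have : ε + ((n : ℝ) * d) • β + d • β = ε + (((n : ℕ) + 1 : ℝ) * d) • β := by
          module
        rw [this] at h3
        convert h3 using 3
        push_cast
        ring
  have hinj : Function.Injective (fun n : ℕ => ε + ((n : ℝ) * d) • β) := by
    intro a b hab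
    simp only at hab
    have : ((a : ℝ) * d - (b : ℝ) * d) • β = 0 := by
      have := sub_eq_zero.mpr hab
      rw [show ε + ((a : ℝ) * d) • β - (ε + ((b : ℝ) * d) • β)
        = ((a : ℝ) * d - (b : ℝ) * d) • β by module] at this
      exact this
    rcases smul_eq_zero.mp this with h | h
    · have hab2 : ((a : ℝ) - (b : ℝ)) * d = 0 := by ring_nf; ring_nf at h; linarith
      rcases mul_eq_zero.mp hab2 with h' | h'
      · have : (a : ℝ) = (b : ℝ) := by linarith
        exact_mod_cast this
      · exact absurd h' hdne
    · exact absurd h (D.root_ne_zero β hβ)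
  obtain ⟨a, _, b, _, hab, heq⟩ := Finset.exists_ne_map_eq_of_card_lt_of_maps_to
    (s := Finset.range (D.roots.card + 1)) (t := D.roots)
    (by simp) (fun n _ => iter n)
  exact hab (hinj heq)

lemma coroot_pairing_equivariant {w : V ≃ₗ[ℝ] V} (hw : w ∈ D.weylGroup)
    {δ : Module.Dual ℝ V} (hδ : δ ∈ D.roots) {ε : Module.Dual ℝ V} (hε : ε ∈ D.roots) :
    (dualAct w ε) (D.coroot (dualAct w δ)) = ε (D.coroot δ) := by
  have hδ' : dualAct w δ ∈ D.roots := D.weyl_maps_roots hw δ hδ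
  set δ' := dualAct w δ with hδ'def
  set c₂ : V := w (D.coroot δ) with hc2
  have h2 : δ' c₂ = 2 := by
    rw [hδ'def, hc2, dualAct_apply]
    exact D.coroot_self δ hδ
  have r2 : ∀ ε' ∈ D.roots, ε' - ε' c₂ • δ' ∈ D.roots := by
    intro ε' hε'
    have hwi : w⁻¹ ∈ D.weylGroup := inv_mem hw
    have hψ : dualAct w⁻¹ ε' ∈ D.roots := D.weyl_maps_roots hwi ε' hε'
    set ψ := dualAct w⁻¹ ε' with hψdef
    have hmem := D.reflection_mem δ hδ ψ hψ
    have hmem2 : dualAct w (ψ - ψ (D.coroot δ) • δ) ∈ D.roots :=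
      D.weyl_maps_roots hw _ hmem
    have e1 : dualAct w ψ = ε' := by rw [hψdef, dualAct_dualAct_inv]
    have e2 : ψ (D.coroot δ) = ε' c₂ := by rw [hψdef, dualAct_inv_apply]
    have key : dualAct w (ψ - ψ (D.coroot δ) • δ) = ε' - ε' c₂ • δ' := by
      rw [dualAct_sub, dualAct_smul, e1, e2, hδ'def]
    rwa [key] at hmem2
  have := D.pairing_unique hδ' (D.coroot δ') c₂ (D.coroot_self δ' hδ') h2
    (D.reflection_mem δ' hδ') r2 (dualAct w ε) (D.weyl_maps_roots hw ε hε)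
  rw [this, hc2, dualAct_apply]

end RootSystemData
section GrowthSeq

/-- Auxiliary 2-term recursive sequence for the dihedral growth argument. -/
private def seqPQ (a b : ℝ) : ℕ → ℝ × ℝ
  | 0 => (1, 0)
  | n+1 => ⟨-(seqPQ a b n).1 - b * (seqPQ a b n).2,
      a * (seqPQ a b n).1 + (a*b-1) * (seqPQ a b n).2⟩

private lemma seqPQ_zero (a b : ℝ) : seqPQ a b 0 = (1, 0) := rfl

private lemma seqPQ_succ (a b : ℝ) (n : ℕ) :
    seqPQ a b (n+1) = ⟨-(seqPQ a b n).1 - b * (seqPQ a b n).2,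
      a * (seqPQ a b n).1 + (a*b-1) * (seqPQ a b n).2⟩ := rfl

private lemma seqPQ_rec (a b : ℝ) (n : ℕ) :
    (seqPQ a b (n+2)).2 = (a*b-2) * (seqPQ a b (n+1)).2 - (seqPQ a b n).2 := by
  rw [seqPQ_succ a b (n+1), seqPQ_succ a b n]
  dsimp only
  ring

private lemma seqPQ_rec4 (a b : ℝ) (m : ℕ) :
    (seqPQ a b (m+4)).2 = ((a*b-2)^2 - 2) * (seqPQ a b (m+2)).2 - (seqPQ a b m).2 := by
  have h1 := seqPQ_rec a b (m+2)
  have h2 := seqPQ_rec a b (m+1)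
  have h3 := seqPQ_rec a b m
  have e1 : m + 2 + 2 = m + 4 := by ring
  have e2 : m + 1 + 2 = m + 3 := by ring
  have e3 : m + 1 + 1 = m + 2 := by ring
  rw [e1, e2] at h1
  rw [e2, e3] at h2
  linear_combination h1 + (a*b-2) * h2 + h3

private lemma grow {S : ℝ} (hS : 2 ≤ S) (x : ℕ → ℝ) (h0 : x 0 = 0) (h1 : 0 < x 1)
    (hrec : ∀ n, x (n+2) = S * x (n+1) - x n) : StrictMono x := by
  have key : ∀ n, x n < x (n+1) ∧ 0 ≤ x n := by
    intro n
    induction n with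
    | zero => exact ⟨by rw [h0]; exact h1, le_of_eq h0.symm⟩
    | succ n ih =>
        obtain ⟨hlt, hge⟩ := ih
        have hpos : 0 < x (n+1) := lt_of_le_of_lt hge hlt
        constructor
        · rw [hrec n]
          nlinarith
        · exact le_of_lt hpos
  exact strictMono_nat_of_lt_succ fun n => (key n).1

end GrowthSeq

namespace RootSystemData

variable {V : Type} [AddCommGroup V] [Module ℝ V] (D : RootSystemData V)

lemma imp_aux {β δ : Module.Dual ℝ V} (hβ : β ∈ D.roots) (hδ : δ ∈ D.roots)
    (hne1 : β ≠ δ) (hne2 : β ≠ -δ) (ha : β (D.coroot δ) ≠ 0)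
    (hbad : β (D.coroot δ) * δ (D.coroot β) ≤ 0 ∨
      4 ≤ β (D.coroot δ) * δ (D.coroot β)) : False := by
  set a := β (D.coroot δ) with hadef
  set b := δ (D.coroot β) with hbdef
  -- single reflection step
  have stepfun : ∀ x y : ℝ, (x • β + y • δ ∈ D.roots) →
      ((-x - b*y) • β + (a*x + (a*b-1)*y) • δ ∈ D.roots) := by
    intro x y hxy
    have h1 := D.reflection_mem β hβ _ hxy
    have e1 : (x • β + y • δ) - ((x • β + y • δ) (D.coroot β)) • β
        = (-x - b*y) • β + y • δ := by
      have hv : (x • β + y • δ) (D.coroot β) = 2*x + b*y := by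
        simp only [LinearMap.add_apply, LinearMap.smul_apply, smul_eq_mul,
          D.coroot_self β hβ, ← hbdef]
        ring
      rw [hv]; module
    rw [e1] at h1
    have h2 := D.reflection_mem δ hδ _ h1
    have e2 : ((-x - b*y) • β + y • δ) - (((-x - b*y) • β + y • δ) (D.coroot δ)) • δ
        = (-x - b*y) • β + (a*x + (a*b-1)*y) • δ := by
      have hv : ((-x - b*y) • β + y • δ) (D.coroot δ) = a*(-x - b*y) + 2*y := by
        simp only [LinearMap.add_apply, LinearMap.smul_apply, smul_eq_mul,
          D.coroot_self δ hδ, ← hadef]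
        ring
      rw [hv]; module
    rwa [e2] at h2
  have eps_mem : ∀ n : ℕ, (seqPQ a b n).1 • β + (seqPQ a b n).2 • δ ∈ D.roots := by
    intro n
    induction n with
    | zero =>
        rw [seqPQ_zero]
        simpa using hβ
    | succ n ih =>
        rw [seqPQ_succ]
        exact stepfun _ _ ih
  set T := a*b - 2 with hT
  have hT2 : T ≤ -2 ∨ 2 ≤ T := by
    rcases hbad with h | h
    · left; rw [hT]; linarith
    · right; rw [hT]; linarith
  have hS : (2:ℝ) ≤ T^2 - 2 := by rcases hT2 with h | h <;> nlinarith
  have hq1 : (seqPQ a b 1).2 = a := by rw [seqPQ_succ, seqPQ_zero]; dsimp; ring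
  have hq2 : (seqPQ a b 2).2 = T * a := by
    have := seqPQ_rec a b 0
    rw [show (0:ℕ)+2 = 2 from rfl, show (0:ℕ)+1 = 1 from rfl] at this
    rw [this, hq1, seqPQ_zero, hT]
    norm_num
  have hq2ne : T * a ≠ 0 := by
    have hTne : T ≠ 0 := by rcases hT2 with h | h <;> intro h0 <;> rw [h0] at h <;> linarith
    exact mul_ne_zero hTne ha
  -- strictly monotone (up to sign) even subsequence
  have hrecr : ∀ sg : ℝ, ∀ n, (fun n => sg * (seqPQ a b (2*n)).2) (n+2)
      = (T^2-2) * ((fun n => sg * (seqPQ a b (2*n)).2) (n+1))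
        - (fun n => sg * (seqPQ a b (2*n)).2) n := by
    intro sg n
    have h4 := seqPQ_rec4 a b (2*n)
    rw [show 2*n+4 = 2*(n+2) by ring, show 2*n+2 = 2*(n+1) by ring] at h4
    dsimp only
    rw [h4, hT]
    ring
  have hmono : ∃ sg : ℝ, StrictMono (fun n => sg * (seqPQ a b (2*n)).2) := by
    rcases lt_trichotomy (T * a) 0 with h | h | h
    · refine ⟨-1, grow hS _ ?_ ?_ (hrecr (-1))⟩
      · show -1 * (seqPQ a b (2*0)).2 = 0
        norm_num [seqPQ_zero]
      · show 0 < -1 * (seqPQ a b (2*1)).2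
        rw [show 2*1 = 2 from rfl, hq2]; nlinarith
    · exact absurd h hq2ne
    · refine ⟨1, grow hS _ ?_ ?_ (hrecr 1)⟩
      · show 1 * (seqPQ a b (2*0)).2 = 0
        norm_num [seqPQ_zero]
      · show 0 < 1 * (seqPQ a b (2*1)).2
        rw [show 2*1 = 2 from rfl, hq2]; nlinarith
  obtain ⟨sg, hsm⟩ := hmono
  -- the even iterates are pairwise distinct roots : contradiction with finiteness
  have hinj : Function.Injective
      (fun n : ℕ => (seqPQ a b (2*n)).1 • β + (seqPQ a b (2*n)).2 • δ) := by
    intro n m hnm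
    dsimp only at hnm
    have h2 := (D.indep_coeffs hβ hδ hne1 hne2 hnm).2
    have : sg * (seqPQ a b (2*n)).2 = sg * (seqPQ a b (2*m)).2 := by rw [h2]
    exact hsm.injective this
  obtain ⟨n, _, m, _, hnm, heq⟩ := Finset.exists_ne_map_eq_of_card_lt_of_maps_to
    (s := Finset.range (D.roots.card + 1)) (t := D.roots)
    (by simp) (fun n _ => eps_mem (2*n))
  exact hnm (by exact_mod_cast hinj heq)

lemma pairing_bad_false {β δ : Module.Dual ℝ V} (hβ : β ∈ D.roots) (hδ : δ ∈ D.roots)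
    (hne1 : β ≠ δ) (hne2 : β ≠ -δ)
    (hne0 : β (D.coroot δ) ≠ 0 ∨ δ (D.coroot β) ≠ 0)
    (hbad : β (D.coroot δ) * δ (D.coroot β) ≤ 0 ∨
      4 ≤ β (D.coroot δ) * δ (D.coroot β)) : False := by
  rcases hne0 with h | h
  · exact D.imp_aux hβ hδ hne1 hne2 h hbad
  · refine D.imp_aux hδ hβ (Ne.symm hne1) ?_ h (by rw [mul_comm] at hbad; exact hbad)
    intro hcon
    exact hne2 (by rw [hcon]; module)

lemma pairing_pos_of_pos {β δ : Module.Dual ℝ V} (hβ : β ∈ D.roots) (hδ : δ ∈ D.roots)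
    (hne1 : β ≠ δ) (hne2 : β ≠ -δ) (ha : 0 < β (D.coroot δ)) :
    0 < δ (D.coroot β) := by
  by_contra h
  push_neg at h
  exact D.pairing_bad_false hβ hδ hne1 hne2 (Or.inl (ne_of_gt ha))
    (Or.inl (mul_nonpos_of_nonneg_of_nonpos (le_of_lt ha) h))

lemma pairing_neg_of_neg {β δ : Module.Dual ℝ V} (hβ : β ∈ D.roots) (hδ : δ ∈ D.roots)
    (hne1 : β ≠ δ) (hne2 : β ≠ -δ) (ha : β (D.coroot δ) < 0) :
    δ (D.coroot β) < 0 := by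
  by_contra h
  push_neg at h
  refine D.pairing_bad_false hβ hδ hne1 hne2 (Or.inl (ne_of_lt ha)) (Or.inl ?_)
  exact mul_nonpos_of_nonpos_of_nonneg (le_of_lt ha) h

lemma pairing_lt_four {β δ : Module.Dual ℝ V} (hβ : β ∈ D.roots) (hδ : δ ∈ D.roots)
    (hne1 : β ≠ δ) (hne2 : β ≠ -δ) (hne0 : β (D.coroot δ) ≠ 0) :
    β (D.coroot δ) * δ (D.coroot β) < 4 := by
  by_contra h
  push_neg at h
  exact D.pairing_bad_false hβ hδ hne1 hne2 (Or.inl hne0) (Or.inr h)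

lemma sub_mem_of_pairing_pos {β δ : Module.Dual ℝ V} (hβ : β ∈ D.roots) (hδ : δ ∈ D.roots)
    (hne1 : β ≠ δ) (hne2 : β ≠ -δ) (ha : 0 < β (D.coroot δ)) : β - δ ∈ D.roots := by
  obtain ⟨m, hm⟩ := D.crystallographic δ hδ β hβ
  obtain ⟨n, hn⟩ := D.crystallographic β hβ δ hδ
  have hb : 0 < δ (D.coroot β) := D.pairing_pos_of_pos hβ hδ hne1 hne2 ha
  have h4 : β (D.coroot δ) * δ (D.coroot β) < 4 := D.pairing_lt_four hβ hδ hne1 hne2 (ne_of_gt ha)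
  rw [hm] at ha h4
  rw [hn] at hb h4
  have hm1 : 1 ≤ m := by exact_mod_cast ha
  have hn1 : 1 ≤ n := by exact_mod_cast hb
  have hmn : m * n < 4 := by exact_mod_cast h4
  have hcase : m = 1 ∨ n = 1 := by
    by_contra hc
    push_neg at hc
    have : 2 ≤ m := lt_of_le_of_ne hm1 (Ne.symm hc.1)
    have : 2 ≤ n := lt_of_le_of_ne hn1 (Ne.symm hc.2)
    nlinarith
  rcases hcase with h | h
  · have := D.reflection_mem δ hδ β hβ
    rw [hm, h] at this
    simpa using this
  · have h1 := D.reflection_mem β hβ δ hδ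
    rw [hn, h] at h1
    have h2 := D.neg_mem_roots h1
    have : -(δ - ((1:ℤ):ℝ) • β) = β - δ := by push_cast; module
    rwa [this] at h2

lemma add_mem_of_pairing_neg {β δ : Module.Dual ℝ V} (hβ : β ∈ D.roots) (hδ : δ ∈ D.roots)
    (hne1 : β ≠ δ) (hne2 : β ≠ -δ) (ha : β (D.coroot δ) < 0) : β + δ ∈ D.roots := by
  obtain ⟨m, hm⟩ := D.crystallographic δ hδ β hβ
  obtain ⟨n, hn⟩ := D.crystallographic β hβ δ hδ
  have hb : δ (D.coroot β) < 0 := D.pairing_neg_of_neg hβ hδ hne1 hne2 ha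
  have h4 : β (D.coroot δ) * δ (D.coroot β) < 4 := D.pairing_lt_four hβ hδ hne1 hne2 (ne_of_lt ha)
  rw [hm] at ha h4
  rw [hn] at hb h4
  have hm1 : m ≤ -1 := by
    have : m < 0 := by exact_mod_cast ha
    omega
  have hn1 : n ≤ -1 := by
    have : n < 0 := by exact_mod_cast hb
    omega
  have hmn : m * n < 4 := by exact_mod_cast h4
  have hcase : m = -1 ∨ n = -1 := by
    by_contra hc
    push_neg at hc
    have : m ≤ -2 := by omega
    have : n ≤ -2 := by omega
    nlinarith
  rcases hcase with h | h
  · have := D.reflection_mem δ hδ β hβ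
    rw [hm, h] at this
    have e : β - ((-1:ℤ):ℝ) • δ = β + δ := by push_cast; module
    rwa [e] at this
  · have h1 := D.reflection_mem β hβ δ hδ
    rw [hn, h] at h1
    have e : δ - ((-1:ℤ):ℝ) • β = β + δ := by push_cast; module
    rw [e] at h1
    exact h1

lemma mem_pos_of_pos_value {v : V} (hdom : D.IsDominant v) {ε : Module.Dual ℝ V}
    (hε : ε ∈ D.roots) (h : 0 < ε v) : ε ∈ D.pos := by
  rcases D.pos_or_neg ε hε with hp | hp
  · exact hp
  · exfalso
    have := hdom _ hp
    simp only [LinearMap.neg_apply] at this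
    linarith

end RootSystemData
namespace RootSystemData

variable {V : Type} [AddCommGroup V] [Module ℝ V] (D : RootSystemData V)

/-- pairing of a string element -/
lemma string_pairing {γ β : Module.Dual ℝ V} (hγ : γ ∈ D.roots) {M : ℝ}
    (hM : β (D.coroot γ) = M) (t : ℝ) :
    (β - t • γ) (D.coroot γ) = M - 2 * t := by
  simp only [LinearMap.sub_apply, LinearMap.smul_apply, smul_eq_mul, hM,
    D.coroot_self γ hγ]
  ring

/-- The γ-string through β is unbroken between β and its reflection (M ≥ 0 case). -/
lemma string_mem {γ β : Module.Dual ℝ V} (hγ : γ ∈ D.roots) (hβ : β ∈ D.roots)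
    (hne1 : β ≠ γ) (hne2 : β ≠ -γ) {M : ℤ} (hM : β (D.coroot γ) = (M : ℝ))
    (hM0 : 0 ≤ M) : ∀ j : ℤ, 0 ≤ j → j ≤ M → β - (j : ℝ) • γ ∈ D.roots := by
  have hprop := D.not_proportional hβ hγ hne1 hne2
  have hnd : ∀ t : ℝ, β - t • γ ≠ γ ∧ β - t • γ ≠ -γ := by
    intro t
    constructor
    · intro h
      exact hprop (t+1) (by rw [show β = (β - t • γ) + t • γ by module, h]; module)
    · intro h
      exact hprop (t-1) (by rw [show β = (β - t • γ) + t • γ by module, h]; module)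
  -- top-down part
  have top : ∀ j : ℕ, (j : ℤ) ≤ M → 2 * (j : ℤ) ≤ M + 1 → β - ((j : ℤ) : ℝ) • γ ∈ D.roots := by
    intro j
    induction j with
    | zero => intro _ _; simpa using hβ
    | succ j ih =>
        intro h1 h2
        have hj1 : (j : ℤ) ≤ M := by push_cast at h1 ⊢; omega
        have hj2 : 2 * (j : ℤ) ≤ M + 1 := by push_cast at h2 ⊢; omega
        have hmem := ih hj1 hj2
        have hpos : 0 < (β - ((j : ℤ) : ℝ) • γ) (D.coroot γ) := by
          rw [D.string_pairing hγ hM]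
          have : (1 : ℤ) ≤ M - 2 * j := by push_cast at h2; omega
          have h0 : ((1 : ℤ) : ℝ) ≤ ((M - 2 * j : ℤ) : ℝ) := by exact_mod_cast this
          push_cast at h0 ⊢
          linarith
        have := D.sub_mem_of_pairing_pos hmem hγ (hnd _).1 (hnd _).2 hpos
        have e : β - ((j : ℤ) : ℝ) • γ - γ = β - (((j : ℕ) + 1 : ℤ) : ℝ) • γ := by
          push_cast; module
        rwa [e] at this
  -- bottom-up part
  set τ : Module.Dual ℝ V := β - (M : ℝ) • γ with hτdef
  have hτ : τ ∈ D.roots := by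
    have := D.reflection_mem γ hγ β hβ
    rwa [hM] at this
  have hτnd : ∀ t : ℝ, τ + t • γ ≠ γ ∧ τ + t • γ ≠ -γ := by
    intro t
    have e : τ + t • γ = β - ((M : ℝ) - t) • γ := by rw [hτdef]; module
    rw [e]
    exact hnd _
  have bot : ∀ i : ℕ, (i : ℤ) ≤ M → 2 * (i : ℤ) ≤ M + 1 → τ + ((i : ℤ) : ℝ) • γ ∈ D.roots := by
    intro i
    induction i with
    | zero => intro _ _; simpa using hτ
    | succ i ih =>
        intro h1 h2
        have hj1 : (i : ℤ) ≤ M := by push_cast at h1 ⊢; omega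
        have hj2 : 2 * (i : ℤ) ≤ M + 1 := by push_cast at h2 ⊢; omega
        have hmem := ih hj1 hj2
        have hneg : (τ + ((i : ℤ) : ℝ) • γ) (D.coroot γ) < 0 := by
          have e : τ + ((i : ℤ) : ℝ) • γ = β - (((M : ℝ)) - ((i : ℤ) : ℝ)) • γ := by
            rw [hτdef]; module
          rw [e, D.string_pairing hγ hM]
          have : 2 * (i : ℤ) - M ≤ -1 := by push_cast at h2; omega
          have h0 : ((2 * (i:ℤ) - M : ℤ) : ℝ) ≤ ((-1 : ℤ) : ℝ) := by exact_mod_cast this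
          push_cast at h0 ⊢
          linarith
        have := D.add_mem_of_pairing_neg hmem hγ (hτnd _).1 (hτnd _).2 hneg
        have e : τ + ((i : ℤ) : ℝ) • γ + γ = τ + (((i : ℕ) + 1 : ℤ) : ℝ) • γ := by
          push_cast; module
        rwa [e] at this
  -- combine
  intro j hj0 hjM
  rcases le_or_gt (2 * j) (M + 1) with hcase | hcase
  · obtain ⟨jn, rfl⟩ := Int.eq_ofNat_of_zero_le hj0
    exact top jn hjM hcase
  · have hi0 : 0 ≤ M - j := by omega
    obtain ⟨ii, hii⟩ := Int.eq_ofNat_of_zero_le hi0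
    have h1 : (ii : ℤ) ≤ M := by omega
    have h2 : 2 * (ii : ℤ) ≤ M + 1 := by omega
    have := bot ii h1 h2
    have e : τ + ((ii : ℤ) : ℝ) • γ = β - (j : ℝ) • γ := by
      rw [hτdef, ← hii]
      push_cast
      module
    rwa [e] at this

/-- A simple reflection sends any other positive root to a positive root. -/
lemma simple_reflect_pos {γ : Module.Dual ℝ V} (hγs : D.IsSimpleRoot γ)
    {β : Module.Dual ℝ V} (hβ : β ∈ D.pos) (hne : β ≠ γ) :
    β - β (D.coroot γ) • γ ∈ D.pos := by
  have hγp : γ ∈ D.pos := hγs.1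
  have hγr : γ ∈ D.roots := D.pos_subset hγp
  have hβr : β ∈ D.roots := D.pos_subset hβ
  have hne2 : β ≠ -γ := by
    intro h
    exact D.pos_not_neg β hβ (by rw [h, neg_neg]; exact hγp)
  have hprop := D.not_proportional hβr hγr hne hne2
  obtain ⟨M, hM⟩ := D.crystallographic γ hγr β hβr
  rw [hM]
  rcases le_or_gt M 0 with hM0 | hM0
  · -- non-positive pairing : walk upwards, staying positive
    set τ : Module.Dual ℝ V := β - ((M : ℤ) : ℝ) • γ with hτdef
    have hτr : τ ∈ D.roots := by
      have := D.reflection_mem γ hγr β hβr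
      rwa [hM] at this
    have hτpair : τ (D.coroot γ) = ((-M : ℤ) : ℝ) := by
      rw [hτdef, D.string_pairing hγr hM]
      push_cast; ring
    have hτne1 : τ ≠ γ := by
      intro h
      refine hprop ((M : ℝ) + 1) ?_
      rw [show β = τ + ((M:ℤ) : ℝ) • γ by rw [hτdef]; module, h]
      module
    have hτne2 : τ ≠ -γ := by
      intro h
      refine hprop ((M : ℝ) - 1) ?_
      rw [show β = τ + ((M:ℤ) : ℝ) • γ by rw [hτdef]; module, h]
      module
    have hstring : ∀ j : ℤ, 0 ≤ j → j ≤ -M → τ - (j : ℝ) • γ ∈ D.roots :=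
      D.string_mem hγr hτr hτne1 hτne2 hτpair (by omega)
    have upward : ∀ i : ℕ, (i : ℤ) ≤ -M → β + ((i : ℕ) : ℝ) • γ ∈ D.pos := by
      intro i
      induction i with
      | zero => intro _; simpa using hβ
      | succ i ih =>
          intro h1
          have hi : (i : ℤ) ≤ -M := by push_cast at h1 ⊢; omega
          have hcur := ih hi
          have hroot : β + (((i : ℕ) + 1 : ℕ) : ℝ) • γ ∈ D.roots := by
            have hj := hstring (-M - (i : ℤ) - 1) (by push_cast at h1; omega) (by omega)
            have e : τ - ((-M - (i : ℤ) - 1 : ℤ) : ℝ) • γ = β + (((i : ℕ) + 1 : ℕ) : ℝ) • γ := by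
              rw [hτdef]; push_cast; module
            rwa [e] at hj
          have hsum := D.pos_add _ hcur γ hγp
          have e2 : β + ((i : ℕ) : ℝ) • γ + γ = β + (((i : ℕ) + 1 : ℕ) : ℝ) • γ := by
            push_cast; module
          rw [e2] at hsum
          exact hsum hroot
    have hfin := upward (-M).toNat (by omega)
    have e : β + (((-M).toNat : ℕ) : ℝ) • γ = β - ((M : ℤ) : ℝ) • γ := by
      have : (((-M).toNat : ℕ) : ℝ) = ((-M : ℤ) : ℝ) := by
        exact_mod_cast congrArg (Int.cast : ℤ → ℝ) (Int.toNat_of_nonneg (by omega))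
      rw [this]; push_cast; module
    rwa [e] at hfin
  · -- positive pairing : crossing argument
    by_contra hτp
    have all : ∀ j : ℕ, (j : ℤ) ≤ M → β - ((j : ℕ) : ℝ) • γ ∈ D.pos := by
      intro j
      induction j with
      | zero => intro _; simpa using hβ
      | succ j ih =>
          intro h1
          have hj : (j : ℤ) ≤ M := by push_cast at h1 ⊢; omega
          have hcur := ih hj
          have hnext : β - (((j : ℕ) + 1 : ℕ) : ℝ) • γ ∈ D.roots := by
            have := D.string_mem hγr hβr hne hne2 hM (le_of_lt hM0)
              ((j : ℤ) + 1) (by omega) (by push_cast at h1; omega)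
            have e : β - (((j : ℤ) + 1 : ℤ) : ℝ) • γ = β - (((j : ℕ) + 1 : ℕ) : ℝ) • γ := by
              push_cast; module
            rwa [e] at this
          by_cases hp : β - (((j : ℕ) + 1 : ℕ) : ℝ) • γ ∈ D.pos
          · exact hp
          · exfalso
            have hneg : -(β - (((j : ℕ) + 1 : ℕ) : ℝ) • γ) ∈ D.pos :=
              (D.pos_or_neg _ hnext).resolve_left hp
            refine hγs.2 ⟨_, hcur, _, hneg, ?_⟩
            push_cast
            module
    have hfin := all M.toNat (by omega)
    have e : β - ((M.toNat : ℕ) : ℝ) • γ = β - ((M : ℤ) : ℝ) • γ := by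
      have : ((M.toNat : ℕ) : ℝ) = ((M : ℤ) : ℝ) := by
        exact_mod_cast congrArg (Int.cast : ℤ → ℝ) (Int.toNat_of_nonneg (by omega))
      rw [this]
    rw [e] at hfin
    exact hτp hfin

end RootSystemData
namespace RootSystemData

variable {V : Type} [AddCommGroup V] [Module ℝ V] (D : RootSystemData V)

/-- `v` is a (possibly empty) sum of positive roots. -/
def IsPosSum (v : Module.Dual ℝ V) : Prop :=
  ∃ l : Multiset (Module.Dual ℝ V), (∀ x ∈ l, x ∈ D.pos) ∧ l.sum = v

lemma isPosSum_zero : D.IsPosSum 0 := ⟨0, by simp, rfl⟩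

lemma isPosSum_single {β : Module.Dual ℝ V} (h : β ∈ D.pos) : D.IsPosSum β :=
  ⟨{β}, by simpa using h, by simp⟩

lemma isPosSum_add {v w : Module.Dual ℝ V} (hv : D.IsPosSum v) (hw : D.IsPosSum w) :
    D.IsPosSum (v + w) := by
  obtain ⟨l, hl, hsl⟩ := hv
  obtain ⟨l', hl', hsl'⟩ := hw
  exact ⟨l + l', by
    intro x hx
    rcases Multiset.mem_add.mp hx with h | h
    exacts [hl x h, hl' x h], by rw [Multiset.sum_add, hsl, hsl']⟩

private lemma eval_multiset_sum (l : Multiset (Module.Dual ℝ V)) (c : V) :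
    l.sum c = (l.map (fun y => y c)).sum := by
  induction l using Multiset.induction_on with
  | empty => simp
  | cons x s ih => simp [ih]

lemma sum_pos_ne_zero : ∀ l : Multiset (Module.Dual ℝ V),
    (∀ x ∈ l, x ∈ D.pos) → l ≠ 0 → l.sum ≠ 0 := by
  suffices h : ∀ n : ℕ, ∀ l : Multiset (Module.Dual ℝ V), Multiset.card l ≤ n →
      (∀ x ∈ l, x ∈ D.pos) → l ≠ 0 → l.sum ≠ 0 by
    exact fun l => h (Multiset.card l) l le_rfl
  classical
  intro n
  induction n with
  | zero =>
      intro l hcard _ hne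
      exact absurd (Multiset.card_eq_zero.mp (Nat.le_zero.mp hcard)) hne
  | succ n ih =>
      intro l hcard hall hne hsum
      obtain ⟨x, hx⟩ := Multiset.exists_mem_of_ne_zero hne
      obtain ⟨l', rfl⟩ := Multiset.exists_cons_of_mem hx
      have hxp : x ∈ D.pos := hall x (Multiset.mem_cons_self x l')
      have hxr : x ∈ D.roots := D.pos_subset hxp
      rcases Multiset.empty_or_exists_mem l' with rfl | ⟨y, hy⟩
      · simp only [Multiset.sum_cons, Multiset.sum_zero, add_zero] at hsum
        exact D.root_ne_zero x hxr hsum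
      · -- the sum of values against coroot x over l' is -2
        have hval : ((l'.map (fun y => y (D.coroot x))).sum : ℝ) = -2 := by
          have h0 : (x ::ₘ l').sum (D.coroot x) = 0 := by rw [hsum]; rfl
          rw [Multiset.sum_cons] at h0
          have : (x + l'.sum) (D.coroot x) = x (D.coroot x) + l'.sum (D.coroot x) := rfl
          rw [this, D.coroot_self x hxr, eval_multiset_sum] at h0
          linarith
        have hexy : ∃ y ∈ l', y (D.coroot x) < 0 := by
          by_contra hc
          push_neg at hc
          have : (0:ℝ) ≤ (l'.map (fun y => y (D.coroot x))).sum :=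
            Multiset.sum_nonneg (by
              intro z hz
              obtain ⟨y, hy, rfl⟩ := Multiset.mem_map.mp hz
              exact hc y hy)
          linarith
        obtain ⟨y, hyl, hyneg⟩ := hexy
        have hyp : y ∈ D.pos := hall y (Multiset.mem_cons_of_mem hyl)
        have hyr : y ∈ D.roots := D.pos_subset hyp
        have hyne1 : y ≠ x := by
          intro h
          rw [h, D.coroot_self x hxr] at hyneg
          linarith
        have hyne2 : y ≠ -x := by
          intro h
          exact D.pos_not_neg x hxp (by rw [← h]; exact hyp)
        have hsumr : y + x ∈ D.roots := D.add_mem_of_pairing_neg hyr hxr hyne1 hyne2 hyneg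
        have hsump : y + x ∈ D.pos := D.pos_add y hyp x hxp hsumr
        set l'' : Multiset (Module.Dual ℝ V) := (y + x) ::ₘ (l'.erase y) with hl''
        have hcard'' : Multiset.card l'' ≤ n := by
          rw [hl'', Multiset.card_cons, Multiset.card_erase_of_mem hyl, Nat.pred_eq_sub_one]
          have h1 : 1 ≤ Multiset.card l' := Multiset.card_pos.mpr (by
            intro h0; rw [h0] at hyl; exact absurd hyl (Multiset.notMem_zero y))
          rw [Multiset.card_cons] at hcard
          omega
        have hall'' : ∀ z ∈ l'', z ∈ D.pos := by
          intro z hz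
          rcases Multiset.mem_cons.mp hz with rfl | hz'
          · exact hsump
          · exact hall z (Multiset.mem_cons_of_mem (Multiset.mem_of_mem_erase hz'))
        have hsum'' : l''.sum = 0 := by
          rw [hl'', Multiset.sum_cons]
          have : l'.sum = y + (l'.erase y).sum := by
            conv_lhs => rw [← Multiset.cons_erase hyl]
            rw [Multiset.sum_cons]
          rw [Multiset.sum_cons, this] at hsum
          rw [show y + x + (l'.erase y).sum = x + (y + (l'.erase y).sum) by abel]
          exact hsum
        exact ih l'' hcard'' hall'' (by simp [hl'']) hsum''

lemma isPosSum_pointed {v : Module.Dual ℝ V} (hv : D.IsPosSum v) (hv' : D.IsPosSum (-v)) :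
    v = 0 := by
  by_contra hne
  obtain ⟨l, hl, hsl⟩ := hv
  obtain ⟨l', hl', hsl'⟩ := hv'
  have hsum : (l + l').sum = 0 := by rw [Multiset.sum_add, hsl, hsl']; abel
  have hne0 : l + l' ≠ 0 := by
    intro h
    have hc : Multiset.card l = 0 := by
      have h2 := congrArg Multiset.card h
      rw [Multiset.card_add] at h2
      simp only [Multiset.card_zero] at h2
      omega
    rw [Multiset.card_eq_zero.mp hc] at hsl
    exact hne (by rw [← hsl]; rfl)
  exact D.sum_pos_ne_zero (l + l') (by
    intro x hx
    rcases Multiset.mem_add.mp hx with h | h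
    exacts [hl x h, hl' x h]) hne0 hsum

open scoped Classical in
/-- Measure used for induction on positive roots along the cone order. -/
noncomputable def posMeasure (α : Module.Dual ℝ V) : ℕ :=
  (D.pos.filter fun β => D.IsPosSum (α - β)).card

lemma posMeasure_lt {α α' : Module.Dual ℝ V} (hα : α ∈ D.pos) (hα' : α' ∈ D.pos)
    (hsum : D.IsPosSum (α - α')) (hne : α' ≠ α) : D.posMeasure α' < D.posMeasure α := by
  classical
  apply Finset.card_lt_card
  constructor
  · intro β hβ
    simp only [Finset.mem_filter] at hβ ⊢
    refine ⟨hβ.1, ?_⟩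
    have := D.isPosSum_add hsum hβ.2
    rwa [show α - α' + (α' - β) = α - β by abel] at this
  · intro hsub
    have hin : α ∈ D.pos.filter fun β => D.IsPosSum (α - β) := by
      simp only [Finset.mem_filter]
      exact ⟨hα, by rw [sub_self]; exact D.isPosSum_zero⟩
    have := hsub hin
    simp only [Finset.mem_filter] at this
    have h0 := D.isPosSum_pointed hsum (by rw [show -(α - α') = α' - α by abel]; exact this.2)
    exact hne (by
      have : α - α' = 0 := h0
      have := sub_eq_zero.mp this
      exact this.symm)

lemma posMeasure_pos {α : Module.Dual ℝ V} (hα : α ∈ D.pos) : 0 < D.posMeasure α := by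
  classical
  apply Finset.card_pos.mpr
  exact ⟨α, by
    simp only [Finset.mem_filter]
    exact ⟨hα, by rw [sub_self]; exact D.isPosSum_zero⟩⟩

lemma exists_simple_parts {β : Module.Dual ℝ V} (hβ : β ∈ D.pos) :
    ∃ l : Multiset (Module.Dual ℝ V), l ≠ 0 ∧ (∀ x ∈ l, D.IsSimpleRoot x) ∧ l.sum = β := by
  suffices h : ∀ n : ℕ, ∀ β, β ∈ D.pos → D.posMeasure β ≤ n →
      ∃ l : Multiset (Module.Dual ℝ V), l ≠ 0 ∧ (∀ x ∈ l, D.IsSimpleRoot x) ∧ l.sum = β by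
    exact h (D.posMeasure β) β hβ le_rfl
  intro n
  induction n with
  | zero =>
      intro β hβ hm
      have := D.posMeasure_pos hβ
      omega
  | succ n ih =>
      intro β hβ hm
      by_cases hs : D.IsSimpleRoot β
      · exact ⟨{β}, by simp, by simpa using hs, by simp⟩
      · have hdec : ∃ b ∈ D.pos, ∃ c ∈ D.pos, β = b + c := by
          by_contra hc
          exact hs ⟨hβ, hc⟩
        obtain ⟨b, hb, c, hc, rfl⟩ := hdec
        have hbne : b ≠ b + c := by
          intro h
          have : c = 0 := by
            have := congrArg (fun z => z - b) h
            simpa using this.symm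
          exact D.root_ne_zero c (D.pos_subset hc) this
        have hcne : c ≠ b + c := by
          intro h
          have : b = 0 := by
            have := congrArg (fun z => z - c) h
            simpa using this.symm
          exact D.root_ne_zero b (D.pos_subset hb) this
        have hmb : D.posMeasure b < D.posMeasure (b + c) :=
          D.posMeasure_lt hβ hb (by
            rw [show b + c - b = c by abel]
            exact D.isPosSum_single hc) hbne
        have hmc : D.posMeasure c < D.posMeasure (b + c) :=
          D.posMeasure_lt hβ hc (by
            rw [show b + c - c = b by abel]
            exact D.isPosSum_single hb) hcne
        obtain ⟨lb, hlb0, hlbs, hlbsum⟩ := ih b hb (by omega)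
        obtain ⟨lc, hlc0, hlcs, hlcsum⟩ := ih c hc (by omega)
        refine ⟨lb + lc, by simp [hlb0], ?_, by rw [Multiset.sum_add, hlbsum, hlcsum]⟩
        intro x hx
        rcases Multiset.mem_add.mp hx with h | h
        exacts [hlbs x h, hlcs x h]

lemma exists_simple_neg_value {β : Module.Dual ℝ V} (hβ : β ∈ D.pos) {v : V}
    (hneg : β v < 0) : ∃ γ, D.IsSimpleRoot γ ∧ γ v < 0 := by
  obtain ⟨l, hl0, hls, hlsum⟩ := D.exists_simple_parts hβ
  by_contra hc
  push_neg at hc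
  have : (0:ℝ) ≤ β v := by
    rw [← hlsum, eval_multiset_sum]
    apply Multiset.sum_nonneg
    intro z hz
    obtain ⟨y, hy, rfl⟩ := Multiset.mem_map.mp hz
    exact hc y (hls y hy)
  linarith

end RootSystemData
namespace RootSystemData

variable {V : Type} [AddCommGroup V] [Module ℝ V] (D : RootSystemData V)

/-- The combinatorial condition equivalent (for `0 < k < ⟨ν,α⟩`) to the length equality. -/
def Ccond (ν : V) (α : Module.Dual ℝ V) : Prop :=
  ∀ β ∈ D.pos, β ≠ α → 0 ≤ β ν * (β ν - β (D.coroot α) * α ν)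

lemma Ccond_ext {ν : V} {α : Module.Dual ℝ V} (hC : D.Ccond ν α) :
    ∀ β ∈ D.roots, β ≠ α → β ≠ -α → 0 ≤ β ν * (β ν - β (D.coroot α) * α ν) := by
  intro β hβr hne1 hne2
  rcases D.pos_or_neg β hβr with hp | hp
  · exact hC β hp hne1
  · have hne : -β ≠ α := by
      intro h
      exact hne2 (by rw [← h, neg_neg])
    have := hC (-β) hp hne
    have e : (-β) ν * ((-β) ν - (-β) (D.coroot α) * α ν)
        = β ν * (β ν - β (D.coroot α) * α ν) := by
      simp only [LinearMap.neg_apply]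
      ring
    linarith [e ▸ this]

lemma dualAct_sRef_invol {γ : Module.Dual ℝ V} (hγ : γ ∈ D.roots)
    (β : Module.Dual ℝ V) : dualAct (D.sRef γ hγ) (dualAct (D.sRef γ hγ) β) = β := by
  rw [← dualAct_mul, D.sRef_mul_self hγ, dualAct_one]

lemma Ccond_transport {ν : V} {α γ : Module.Dual ℝ V} (hα : α ∈ D.pos)
    (hγr : γ ∈ D.roots) (hC : D.Ccond ν α)
    (hα' : dualAct (D.sRef γ hγr) α ∈ D.pos) :
    D.Ccond (D.sRef γ hγr ν) (dualAct (D.sRef γ hγr) α) := by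
  intro β hβ hne
  set s := D.sRef γ hγr with hs
  have hαr : α ∈ D.roots := D.pos_subset hα
  have hβr : β ∈ D.roots := D.pos_subset hβ
  have hsw : s ∈ D.weylGroup := D.sRef_mem_weylGroup hγr
  set B : Module.Dual ℝ V := dualAct s β with hB
  have hBr : B ∈ D.roots := D.weyl_maps_roots hsw β hβr
  have hBB : dualAct s B = β := D.dualAct_sRef_invol hγr β
  have hv : β (s ν) = B ν := by
    conv_lhs => rw [← hBB]
    exact dualAct_apply s B ν
  have hm : β (D.coroot (dualAct s α)) = B (D.coroot α) := by
    have := D.coroot_pairing_equivariant hsw hαr hBr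
    rwa [hBB] at this
  have hc : (dualAct s α) (s ν) = α ν := dualAct_apply s α ν
  rw [hv, hm, hc]
  apply D.Ccond_ext hC B hBr
  · intro h
    rw [h] at hBB
    exact hne hBB.symm
  · intro h
    rw [h, dualAct_neg] at hBB
    exact D.pos_not_neg _ hα' (hBB ▸ hβ)

lemma Ccond_of_exists {ν : V} {α : Module.Dual ℝ V} (hα : α ∈ D.pos) (hν : 0 < α ν)
    (h : ∃ w ∈ D.weylGroup, D.IsDominant (w ν) ∧ D.IsSimpleRoot (dualAct w α)) :
    D.Ccond ν α := by
  obtain ⟨w, hw, hdom, hsimp⟩ := h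
  intro β hβ hne
  by_contra hlt
  push_neg at hlt
  have hαr : α ∈ D.roots := D.pos_subset hα
  have hβr : β ∈ D.roots := D.pos_subset hβ
  set γ : Module.Dual ℝ V := dualAct w α with hγ
  have hγr : γ ∈ D.roots := D.weyl_maps_roots hw α hαr
  set b : Module.Dual ℝ V := dualAct w β with hb
  have hbr : b ∈ D.roots := D.weyl_maps_roots hw β hβr
  have hm : b (D.coroot γ) = β (D.coroot α) := D.coroot_pairing_equivariant hw hαr hβr
  have hx : b (w ν) = β ν := dualAct_apply w β ν
  have hcc : γ (w ν) = α ν := dualAct_apply w α ν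
  have hbγ : b ≠ γ := by
    intro h
    exact hne (dualAct_injective w h)
  have hbnγ : b ≠ -γ := by
    intro h
    rw [hγ, ← dualAct_neg] at h
    have := dualAct_injective w h
    apply D.pos_not_neg β hβ
    rw [this, neg_neg]
    exact hα
  rcases mul_neg_iff.mp hlt with ⟨h1, h2⟩ | ⟨h1, h2⟩
  · -- β ν > 0 and β ν < m * c
    have hbp : b ∈ D.pos := D.mem_pos_of_pos_value hdom hbr (by rw [hx]; exact h1)
    have hnext := D.simple_reflect_pos hsimp hbp hbγ
    have := hdom _ hnext
    have hval : (b - b (D.coroot γ) • γ) (w ν) = β ν - β (D.coroot α) * α ν := by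
      simp only [LinearMap.sub_apply, LinearMap.smul_apply, smul_eq_mul]
      rw [hx, hcc, hm]
    rw [hval] at this
    linarith
  · -- β ν < 0 and β ν > m * c
    obtain ⟨m, hmdef⟩ : ∃ m : ℝ, b (D.coroot γ) = m := ⟨_, rfl⟩
    set τ : Module.Dual ℝ V := b - m • γ with hτ
    have hτr : τ ∈ D.roots := by
      have := D.reflection_mem γ hγr b hbr
      rwa [hmdef] at this
    have hτval : τ (w ν) = β ν - β (D.coroot α) * α ν := by
      rw [hτ]
      simp only [LinearMap.sub_apply, LinearMap.smul_apply, smul_eq_mul]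
      rw [hx, hcc, ← hmdef, hm]
    have hτp : τ ∈ D.pos := D.mem_pos_of_pos_value hdom hτr (by rw [hτval]; linarith)
    have hτγ : τ ≠ γ := by
      intro h
      have hbval : b = τ + m • γ := by rw [hτ]; module
      rw [h] at hbval
      have : b = (1 + m) • γ := by rw [hbval]; module
      exact D.not_proportional hbr hγr hbγ hbnγ _ this
    have hback := D.simple_reflect_pos hsimp hτp hτγ
    have hτpair : τ (D.coroot γ) = -m := by
      rw [hτ]
      simp only [LinearMap.sub_apply, LinearMap.smul_apply, smul_eq_mul,
        D.coroot_self γ hγr, hmdef]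
      ring
    have hbeq : τ - τ (D.coroot γ) • γ = b := by
      rw [hτpair, hτ]
      module
    rw [hbeq] at hback
    have := hdom b hback
    rw [hx] at this
    linarith

end RootSystemData
namespace RootSystemData

variable {V : Type} [AddCommGroup V] [Module ℝ V] (D : RootSystemData V)

lemma exists_w_of_dominant {ν : V} (hdom : D.IsDominant ν) :
    ∀ α, α ∈ D.pos → 0 < α ν → D.Ccond ν α →
    ∃ w ∈ D.weylGroup, w ν = ν ∧ D.IsSimpleRoot (dualAct w α) := by
  suffices h : ∀ n : ℕ, ∀ α, α ∈ D.pos → D.posMeasure α ≤ n → 0 < α ν → D.Ccond ν α →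
      ∃ w ∈ D.weylGroup, w ν = ν ∧ D.IsSimpleRoot (dualAct w α) by
    exact fun α hα => h (D.posMeasure α) α hα le_rfl
  intro n
  induction n with
  | zero =>
      intro α hα hm
      have := D.posMeasure_pos hα
      omega
  | succ n ih =>
      intro α hα hm hαν hC
      by_cases hs : D.IsSimpleRoot α
      · exact ⟨1, one_mem _, rfl, by rw [dualAct_one]; exact hs⟩
      have hαr : α ∈ D.roots := D.pos_subset hα
      have hdec : ∃ b ∈ D.pos, ∃ c ∈ D.pos, α = b + c := by
        by_contra hcon
        exact hs ⟨hα, hcon⟩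
      obtain ⟨b, hb, c, hc, hbc⟩ := hdec
      have hbr : b ∈ D.roots := D.pos_subset hb
      have hcr : c ∈ D.roots := D.pos_subset hc
      have hbα : b ≠ α := by
        intro h
        have : c = 0 := by
          have := hbc
          rw [← h] at this
          have h2 := congrArg (fun z => z - b) this
          simpa using h2.symm
        exact D.root_ne_zero c hcr this
      have hcα : c ≠ α := by
        intro h
        have : b = 0 := by
          have := hbc
          rw [← h] at this
          have h2 := congrArg (fun z => z - c) this
          simpa using h2.symm
        exact D.root_ne_zero b hbr this
      obtain ⟨mb, hmb⟩ := D.crystallographic α hαr b hbr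
      obtain ⟨mc, hmc⟩ := D.crystallographic α hαr c hcr
      have hsum2 : (mb : ℝ) + (mc : ℝ) = 2 := by
        have : b (D.coroot α) + c (D.coroot α) = α (D.coroot α) := by
          rw [hbc]; rfl
        rw [hmb, hmc, D.coroot_self α hαr] at this
        exact this
      have hsum2' : mb + mc = 2 := by exact_mod_cast hsum2
      have hbν : 0 ≤ b ν := hdom b hb
      have hcν : 0 ≤ c ν := hdom c hc
      have hνsum : b ν + c ν = α ν := by rw [hbc]; rfl
      -- find δ ∈ {b,c} with δ ν = 0 and 0 < δ (coroot α)
      have hδex : ∃ δ, δ ∈ D.pos ∧ δ ν = 0 ∧ 0 < δ (D.coroot α) ∧ δ ≠ α := by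
        rcases le_or_gt 1 mb with h1 | h1
        · have hCb := hC b hb hbα
          rcases eq_or_lt_of_le hbν with h0 | h0
          · exact ⟨b, hb, h0.symm, by rw [hmb]; exact_mod_cast (by omega : (0:ℤ) < mb), hbα⟩
          · -- b ν > 0 forces b ν ≥ mb * α ν, so b ν = α ν, mb = 1, c ν = 0
            have hge : (mb : ℝ) * α ν ≤ b ν := by
              by_contra hlt
              push_neg at hlt
              rw [hmb] at hCb
              nlinarith [mul_pos h0 (sub_pos.mpr hlt)]
            have hb1 : (1:ℝ) ≤ (mb : ℝ) := by exact_mod_cast h1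
            have hb2 : α ν ≤ (mb : ℝ) * α ν := le_mul_of_one_le_left (le_of_lt hαν) hb1
            have hcν0 : c ν = 0 := by linarith
            have hmb1 : (mb : ℝ) = 1 := by
              have hb3 : (mb : ℝ) * α ν ≤ 1 * α ν := by linarith
              have hb4 := (mul_le_mul_iff_of_pos_right hαν).mp hb3
              linarith
            have hmc1 : mc = 1 := by
              have : mb = 1 := by exact_mod_cast hmb1
              omega
            exact ⟨c, hc, hcν0, by rw [hmc, hmc1]; norm_num, hcα⟩
        · -- mb ≤ 0, so mc ≥ 2
          have hmc2 : 2 ≤ mc := by omega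
          have hCc := hC c hc hcα
          rcases eq_or_lt_of_le hcν with h0 | h0
          · exact ⟨c, hc, h0.symm, by rw [hmc]; exact_mod_cast (by omega : (0:ℤ) < mc), hcα⟩
          · exfalso
            have hge : (mc : ℝ) * α ν ≤ c ν := by
              by_contra hlt
              push_neg at hlt
              rw [hmc] at hCc
              nlinarith [mul_pos h0 (sub_pos.mpr hlt)]
            have hc2 : (2:ℝ) ≤ (mc : ℝ) := by exact_mod_cast hmc2
            have hc3 : (2:ℝ) * α ν ≤ (mc : ℝ) * α ν :=
              mul_le_mul_of_nonneg_right hc2 (le_of_lt hαν)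
            linarith
      obtain ⟨δ, hδp, hδν, hδa, hδα⟩ := hδex
      have hδr : δ ∈ D.roots := D.pos_subset hδp
      have hδnα : δ ≠ -α := by
        intro h
        apply D.pos_not_neg δ hδp
        rw [h, neg_neg]
        exact hα
      have hbb : 0 < α (D.coroot δ) := D.pairing_pos_of_pos hδr hαr hδα hδnα hδa
      set s := D.sRef δ hδr with hsdef
      have hsν : s ν = ν := by
        rw [hsdef, D.sRef_apply hδr, hδν, zero_smul, sub_zero]
      set α' : Module.Dual ℝ V := dualAct s α with hα'def
      have hα'r : α' ∈ D.roots :=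
        D.weyl_maps_roots (D.sRef_mem_weylGroup hδr) α hαr
      have hα'ν : α' ν = α ν := by
        conv_lhs => rw [← hsν]
        exact dualAct_apply s α ν
      have hα'p : α' ∈ D.pos := D.mem_pos_of_pos_value hdom hα'r (by rw [hα'ν]; exact hαν)
      have hα'eq : α' = α - α (D.coroot δ) • δ := by
        rw [hα'def, hsdef, D.dualAct_sRef hδr]
      have hα'ne : α' ≠ α := by
        intro h
        rw [hα'eq] at h
        have : α (D.coroot δ) • δ = 0 := by
          have h2 := congrArg (fun z => α - z) h
          simpa using h2
        rcases smul_eq_zero.mp this with h' | h'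
        · rw [h'] at hbb; exact lt_irrefl 0 hbb
        · exact D.root_ne_zero δ hδr h'
      -- α - α' is a (nonempty) sum of positive roots
      obtain ⟨nb, hnb⟩ := D.crystallographic δ hδr α hαr
      have hnb1 : 1 ≤ nb := by
        rw [hnb] at hbb
        exact_mod_cast hbb
      have hps : D.IsPosSum (α - α') := by
        refine ⟨Multiset.replicate nb.toNat δ, ?_, ?_⟩
        · intro x hx
          rw [Multiset.eq_of_mem_replicate hx]
          exact hδp
        · rw [Multiset.sum_replicate, hα'eq, hnb]
          rw [show α - (α - ((nb : ℤ) : ℝ) • δ) = ((nb : ℤ) : ℝ) • δ by module]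
          rw [← Nat.cast_smul_eq_nsmul ℝ]
          congr 1
          exact_mod_cast congrArg (fun z : ℤ => (z : ℝ)) (Int.toNat_of_nonneg (by omega : (0:ℤ) ≤ nb))
      have hmeas : D.posMeasure α' < D.posMeasure α := D.posMeasure_lt hα hα'p hps hα'ne
      have hC' : D.Ccond ν α' := by
        have := D.Ccond_transport hα hδr hC (by rw [← hα'def]; exact hα'p)
        rwa [← hsdef, hsν, ← hα'def] at this
      obtain ⟨w', hw', hw'ν, hw'simp⟩ := ih α' hα'p (by omega) (by rw [hα'ν]; exact hαν) hC'
      refine ⟨w' * s, mul_mem hw' (D.sRef_mem_weylGroup hδr), ?_, ?_⟩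
      · show w' (s ν) = ν
        rw [hsν, hw'ν]
      · rw [dualAct_mul, ← hα'def]
        exact hw'simp

open scoped Classical in
noncomputable def negCount (ν : V) : ℕ := (D.pos.filter fun β => β ν < 0).card

lemma exists_w_of_Ccond : ∀ (ν : V) (α : Module.Dual ℝ V), α ∈ D.pos → 0 < α ν →
    D.Ccond ν α →
    ∃ w ∈ D.weylGroup, D.IsDominant (w ν) ∧ D.IsSimpleRoot (dualAct w α) := by
  classical
  suffices h : ∀ n : ℕ, ∀ (ν : V) (α : Module.Dual ℝ V), D.negCount ν ≤ n → α ∈ D.pos →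
      0 < α ν → D.Ccond ν α →
      ∃ w ∈ D.weylGroup, D.IsDominant (w ν) ∧ D.IsSimpleRoot (dualAct w α) by
    exact fun ν α hα hν hC => h (D.negCount ν) ν α le_rfl hα hν hC
  intro n
  induction n with
  | zero =>
      intro ν α hcount hα hν hC
      have hdom : D.IsDominant ν := by
        intro β hβ
        by_contra hneg
        push_neg at hneg
        have : β ∈ D.pos.filter fun β => β ν < 0 := Finset.mem_filter.mpr ⟨hβ, hneg⟩
        have hpos : 0 < D.negCount ν := Finset.card_pos.mpr ⟨β, this⟩
        omega
      obtain ⟨w, hw, hwν, hwsimp⟩ := D.exists_w_of_dominant hdom α hα hν hC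
      exact ⟨w, hw, by rw [hwν]; exact hdom, hwsimp⟩
  | succ n ih =>
      intro ν α hcount hα hν hC
      by_cases hdom : D.IsDominant ν
      · obtain ⟨w, hw, hwν, hwsimp⟩ := D.exists_w_of_dominant hdom α hα hν hC
        exact ⟨w, hw, by rw [hwν]; exact hdom, hwsimp⟩
      · -- descent step
        have hβ0 : ∃ β ∈ D.pos, β ν < 0 := by
          by_contra hcon
          push_neg at hcon
          exact hdom fun β hβ => hcon β hβ
        obtain ⟨β0, hβ0p, hβ0ν⟩ := hβ0
        obtain ⟨γ, hγs, hγν⟩ := D.exists_simple_neg_value hβ0p hβ0ν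
        have hγp : γ ∈ D.pos := hγs.1
        have hγr : γ ∈ D.roots := D.pos_subset hγp
        have hαγ : α ≠ γ := by
          intro h
          rw [h] at hν
          linarith
        set s := D.sRef γ hγr with hsdef
        set ν' : V := s ν with hν'def
        set α' : Module.Dual ℝ V := dualAct s α with hα'def
        have hα'eq : α' = α - α (D.coroot γ) • γ := by
          rw [hα'def, hsdef, D.dualAct_sRef hγr]
        have hα'p : α' ∈ D.pos := by
          rw [hα'eq]
          exact D.simple_reflect_pos hγs hα hαγ
        have hα'ν' : α' ν' = α ν := dualAct_apply s α ν
        have hC' : D.Ccond ν' α' :=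
          D.Ccond_transport hα hγr hC (by rw [← hα'def]; exact hα'p)
        -- the number of positive roots negative on ν decreases
        have hdromcount : D.negCount ν' < D.negCount ν := by
          have hγmem : γ ∈ D.pos.filter fun β => β ν < 0 :=
            Finset.mem_filter.mpr ⟨hγp, hγν⟩
          have hmaps : ∀ β ∈ D.pos.filter (fun β => β ν' < 0),
              dualAct s β ∈ (D.pos.filter fun β => β ν < 0).erase γ := by
            intro β hβ
            obtain ⟨hβp, hβν'⟩ := Finset.mem_filter.mp hβ
            have hβγ : β ≠ γ := by
              intro h
              rw [h] at hβν'
              have : γ ν' = -(γ ν) := by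
                rw [hν'def, hsdef, D.sRef_apply hγr]
                simp only [map_sub, map_smul, smul_eq_mul, D.coroot_self γ hγr]
                ring
              rw [this] at hβν'
              linarith
            have hmem : dualAct s β ∈ D.pos := by
              rw [hsdef, D.dualAct_sRef hγr]
              exact D.simple_reflect_pos hγs hβp hβγ
            have hval : (dualAct s β) ν = β ν' := by
              have hss : s ν' = ν := by
                rw [hν'def, hsdef]
                exact D.sRef_sRef hγr ν
              conv_lhs => rw [← hss]
              exact dualAct_apply s β ν'
            refine Finset.mem_erase.mpr ⟨?_, Finset.mem_filter.mpr ⟨hmem, by rw [hval]; exact hβν'⟩⟩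
            intro h
            have : β = dualAct s γ := by
              rw [← h, D.dualAct_sRef_invol hγr]
            rw [hsdef, D.dualAct_sRef hγr, D.coroot_self γ hγr] at this
            have hβnegγ : β = -γ := by
              rw [this]; module
            apply D.pos_not_neg γ hγp
            rw [← hβnegγ]
            exact hβp
          have hinj : Set.InjOn (dualAct s) (D.pos.filter fun β => β ν' < 0) :=
            fun x _ y _ h => dualAct_injective s h
          have h1 := Finset.card_le_card_of_injOn _ hmaps hinj
          have h2 : ((D.pos.filter fun β => β ν < 0).erase γ).card
              = (D.pos.filter fun β => β ν < 0).card - 1 :=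
            Finset.card_erase_of_mem hγmem
          have h3 : 0 < (D.pos.filter fun β => β ν < 0).card :=
            Finset.card_pos.mpr ⟨γ, hγmem⟩
          unfold negCount
          omega
        obtain ⟨w', hw', hw'dom, hw'simp⟩ := ih ν' α' (by omega) hα'p
          (by rw [hα'ν']; exact hν) hC'
        refine ⟨w' * s, mul_mem hw' (D.sRef_mem_weylGroup hγr), ?_, ?_⟩
        · show D.IsDominant (w' (s ν))
          rw [← hν'def]
          exact hw'dom
        · rw [dualAct_mul, ← hα'def]
          exact hw'simp

end RootSystemData
namespace RootSystemData

variable {V : Type} [AddCommGroup V] [Module ℝ V] (D : RootSystemData V)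

open scoped Classical in
/-- The "absolute value" of the reflection `s_α` acting on positive roots. -/
noncomputable def sig (α : Module.Dual ℝ V) (β : Module.Dual ℝ V) : Module.Dual ℝ V :=
  if β - β (D.coroot α) • α ∈ D.pos then β - β (D.coroot α) • α
  else -(β - β (D.coroot α) • α)

lemma sStar_sStar {α : Module.Dual ℝ V} (hαr : α ∈ D.roots) (β : Module.Dual ℝ V) :
    (β - β (D.coroot α) • α) - ((β - β (D.coroot α) • α) (D.coroot α)) • α = β := by
  have h : (β - β (D.coroot α) • α) (D.coroot α) = -(β (D.coroot α)) := by
    simp only [LinearMap.sub_apply, LinearMap.smul_apply, smul_eq_mul,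
      D.coroot_self α hαr]
    ring
  rw [h]
  module

lemma sStar_neg {α : Module.Dual ℝ V} (β : Module.Dual ℝ V) :
    (-β) - (-β) (D.coroot α) • α = -(β - β (D.coroot α) • α) := by
  simp only [LinearMap.neg_apply]
  module

lemma sStar_self {α : Module.Dual ℝ V} (hαr : α ∈ D.roots) :
    α - α (D.coroot α) • α = -α := by
  rw [D.coroot_self α hαr]
  module

lemma sig_mem {α : Module.Dual ℝ V} (hα : α ∈ D.pos) {β : Module.Dual ℝ V}
    (hβ : β ∈ D.pos) : D.sig α β ∈ D.pos := by
  classical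
  have hroot : β - β (D.coroot α) • α ∈ D.roots :=
    D.reflection_mem α (D.pos_subset hα) β (D.pos_subset hβ)
  unfold sig
  split_ifs with h
  · exact h
  · exact (D.pos_or_neg _ hroot).resolve_left h

lemma sig_spec (α β : Module.Dual ℝ V) :
    (D.sig α β = β - β (D.coroot α) • α ∧ β - β (D.coroot α) • α ∈ D.pos) ∨
    (D.sig α β = -(β - β (D.coroot α) • α) ∧ β - β (D.coroot α) • α ∉ D.pos) := by
  classical
  unfold sig
  split_ifs with h
  · exact Or.inl ⟨rfl, h⟩
  · exact Or.inr ⟨rfl, h⟩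

lemma sig_sig {α : Module.Dual ℝ V} (hα : α ∈ D.pos) {β : Module.Dual ℝ V}
    (hβ : β ∈ D.pos) : D.sig α (D.sig α β) = β := by
  have hαr : α ∈ D.roots := D.pos_subset hα
  rcases D.sig_spec α β with ⟨e1, h1⟩ | ⟨e1, h1⟩
  · rw [e1]
    rcases D.sig_spec α (β - β (D.coroot α) • α) with ⟨e2, h2⟩ | ⟨e2, h2⟩
    · rw [e2]
      exact D.sStar_sStar hαr β
    · rw [D.sStar_sStar hαr β] at h2
      exact absurd hβ h2
  · rw [e1]
    rcases D.sig_spec α (-(β - β (D.coroot α) • α)) with ⟨e2, h2⟩ | ⟨e2, h2⟩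
    · rw [D.sStar_neg, D.sStar_sStar hαr β] at h2
      exact absurd h2 (D.pos_not_neg β hβ)
    · rw [e2, D.sStar_neg, D.sStar_sStar hαr β, neg_neg]

lemma sig_ne {α : Module.Dual ℝ V} (hα : α ∈ D.pos) {β : Module.Dual ℝ V}
    (hβ : β ∈ D.pos) (hne : β ≠ α) : D.sig α β ≠ α := by
  have hαr : α ∈ D.roots := D.pos_subset hα
  rcases D.sig_spec α β with ⟨e1, _⟩ | ⟨e1, _⟩ <;> rw [e1]
  · intro heq
    have h3 : β = α - α (D.coroot α) • α := by
      conv_lhs => rw [← D.sStar_sStar hαr β]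
      rw [heq]
    rw [D.sStar_self hαr] at h3
    exact D.pos_not_neg α hα (h3 ▸ hβ)
  · intro heq
    have h2 : β - β (D.coroot α) • α = -α := neg_eq_iff_eq_neg.mp heq
    have h3 : β = (-α) - (-α) (D.coroot α) • α := by
      conv_lhs => rw [← D.sStar_sStar hαr β]
      rw [h2]
    rw [D.sStar_neg, D.sStar_self hαr, neg_neg] at h3
    exact hne h3

lemma sig_abs (α β : Module.Dual ℝ V) (v : V) :
    |(D.sig α β) v| = |(β - β (D.coroot α) • α) v| := by
  classical
  unfold sig
  split_ifs with h
  · rfl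
  · rw [LinearMap.neg_apply, abs_neg]

lemma coLen_sRef {γ : Module.Dual ℝ V} (hγr : γ ∈ D.roots) (hγp : γ ∈ D.pos) (v : V) :
    D.coLen (D.sRef γ hγr v) = D.coLen v := by
  unfold coLen
  refine Finset.sum_nbij' (D.sig γ) (D.sig γ) (fun β hβ => D.sig_mem hγp hβ)
    (fun β hβ => D.sig_mem hγp hβ) (fun β hβ => D.sig_sig hγp hβ)
    (fun β hβ => D.sig_sig hγp hβ) ?_
  intro β hβ
  have hval : β (D.sRef γ hγr v) = (β - β (D.coroot γ) • γ) v := by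
    rw [D.sRef_apply hγr]
    simp only [map_sub, map_smul, smul_eq_mul, LinearMap.sub_apply, LinearMap.smul_apply]
    ring
  rw [hval, ← D.sig_abs]

end RootSystemData
section AbsHelpers

private lemma prod_sign_iff {x s : ℝ} (hs : 0 < s) : 0 ≤ x * (x - s) ↔ (x ≤ 0 ∨ s ≤ x) := by
  constructor
  · intro h
    by_contra hc
    push_neg at hc
    obtain ⟨h1, h2⟩ := hc
    nlinarith
  · rintro (h | h) <;> nlinarith

private lemma absF_core {x s t : ℝ} (h1 : 0 < t) (h2 : t < s) :
    |x - t| + |x - (s - t)| ≤ |x| + |x - s| ∧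
    (|x| + |x - s| = |x - t| + |x - (s - t)| ↔ 0 ≤ x * (x - s)) := by
  have hs : 0 < s := lt_trans h1 h2
  rw [prod_sign_iff hs]
  rcases le_or_gt x 0 with hx | hx
  · have e1 : |x| = -x := abs_of_nonpos hx
    have e2 : |x - s| = -(x - s) := abs_of_nonpos (by linarith)
    have e3 : |x - t| = -(x - t) := abs_of_nonpos (by linarith)
    have e4 : |x - (s - t)| = -(x - (s - t)) := abs_of_nonpos (by linarith)
    rw [e1, e2, e3, e4]
    constructor
    · linarith
    · constructor
      · intro _; exact Or.inl hx
      · intro _; ring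
  · rcases le_or_gt s x with hx2 | hx2
    · have e1 : |x| = x := abs_of_pos hx
      have e2 : |x - s| = x - s := abs_of_nonneg (by linarith)
      have e3 : |x - t| = x - t := abs_of_nonneg (by linarith)
      have e4 : |x - (s - t)| = x - (s - t) := abs_of_nonneg (by linarith)
      rw [e1, e2, e3, e4]
      constructor
      · linarith
      · constructor
        · intro _; exact Or.inr hx2
        · intro _; ring
    · have hr : |x| + |x - s| = s := by
        rw [abs_of_pos hx, abs_of_neg (by linarith : x - s < 0)]; ring
      rw [hr]
      constructor
      · rcases abs_cases (x - t) with ⟨e3, h3⟩ | ⟨e3, h3⟩ <;>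
          rcases abs_cases (x - (s - t)) with ⟨e4, h4⟩ | ⟨e4, h4⟩ <;>
          rw [e3, e4] <;> linarith
      · constructor
        · intro heq
          exfalso
          rcases abs_cases (x - t) with ⟨e3, h3⟩ | ⟨e3, h3⟩ <;>
            rcases abs_cases (x - (s - t)) with ⟨e4, h4⟩ | ⟨e4, h4⟩ <;>
            rw [e3, e4] at heq <;> linarith
        · rintro (h | h) <;> (exfalso; linarith)

private lemma absF (x m c k : ℝ) (hk0 : 0 < k) (hkc : k < c) :
    |x - k*m| + |x - (m*c - k*m)| ≤ |x| + |x - m*c| ∧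
    (|x| + |x - m*c| = |x - k*m| + |x - (m*c - k*m)| ↔ 0 ≤ x * (x - m*c)) := by
  rcases lt_trichotomy m 0 with hm | hm | hm
  · have h1 : 0 < -(k*m) := by nlinarith
    have h2 : -(k*m) < -(m*c) := by nlinarith
    have hcore := absF_core (x := -x) h1 h2
    have e1 : -x - -(k*m) = -(x - k*m) := by ring
    have e2 : -x - (-(m*c) - -(k*m)) = -(x - (m*c - k*m)) := by ring
    have e3 : -x - -(m*c) = -(x - m*c) := by ring
    have e4 : -x * (-x - -(m*c)) = x * (x - m*c) := by ring
    rw [e4, e1, e2, e3, abs_neg, abs_neg, abs_neg, abs_neg] at hcore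
    exact hcore
  · subst hm
    simp only [mul_zero, zero_mul, sub_zero]
    exact ⟨le_refl _, by
      constructor
      · intro _; exact mul_self_nonneg x
      · intro _; trivial⟩
  · have h1 : 0 < k*m := mul_pos hk0 hm
    have h2 : k*m < m*c := by nlinarith
    exact absF_core h1 h2

end AbsHelpers

namespace RootSystemData

variable {V : Type} [AddCommGroup V] [Module ℝ V] (D : RootSystemData V)

lemma coLen_eq_iff_Ccond {ν : V} {α : Module.Dual ℝ V} (hα : α ∈ D.pos)
    (hc : 0 < α ν) {k : ℝ} (hk0 : 0 < k) (hkc : k < α ν) :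
    (D.coLen ν = D.coLen (ν - k • D.coroot α) + 2 * min k (α ν - k)) ↔ D.Ccond ν α := by
  classical
  have hαr : α ∈ D.roots := D.pos_subset hα
  set μ : V := ν - k • D.coroot α with hμdef
  have hμval : ∀ β : Module.Dual ℝ V, β μ = β ν - k * β (D.coroot α) := by
    intro β
    rw [hμdef]
    simp only [map_sub, map_smul, smul_eq_mul]
  have hαμ : α μ = α ν - 2 * k := by
    rw [hμval, D.coroot_self α hαr]; ring
  have hαterm : |α ν| - |α μ| = 2 * min k (α ν - k) := by
    rw [hαμ, abs_of_pos hc]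
    rcases le_total k (α ν - k) with h | h
    · rw [min_eq_left h, abs_of_nonneg (by linarith)]
      ring
    · rw [min_eq_right h, abs_of_nonpos (by linarith)]
      ring
  -- per-root quantity for the erased sum
  have key : ∀ β ∈ D.pos.erase α,
      (|β ν| - |β μ|) + (|(D.sig α β) ν| - |(D.sig α β) μ|)
      = (|β ν| + |β ν - β (D.coroot α) * α ν|)
        - (|β ν - k * β (D.coroot α)| + |β ν - (β (D.coroot α) * α ν - k * β (D.coroot α))|) := by
    intro β hβS
    have hβ : β ∈ D.pos := Finset.mem_erase.mp hβS |>.2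
    have hsval1 : |(D.sig α β) ν| = |β ν - β (D.coroot α) * α ν| := by
      rw [D.sig_abs]
      simp only [LinearMap.sub_apply, LinearMap.smul_apply, smul_eq_mul]
    have hsval2 : |(D.sig α β) μ| = |β ν - (β (D.coroot α) * α ν - k * β (D.coroot α))| := by
      rw [D.sig_abs]
      simp only [LinearMap.sub_apply, LinearMap.smul_apply, smul_eq_mul]
      rw [hμval, hαμ]
      ring_nf
    rw [hsval1, hsval2, hμval]
    ring
  -- reindexing by the involution
  have hreindex : ∑ β ∈ D.pos.erase α, (|β ν| - |β μ|)
      = ∑ β ∈ D.pos.erase α, (|(D.sig α β) ν| - |(D.sig α β) μ|) := by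
    refine Finset.sum_nbij' (D.sig α) (D.sig α) ?_ ?_ ?_ ?_ ?_
    · intro β hβ
      obtain ⟨hne, hβp⟩ := Finset.mem_erase.mp hβ
      exact Finset.mem_erase.mpr ⟨D.sig_ne hα hβp hne, D.sig_mem hα hβp⟩
    · intro β hβ
      obtain ⟨hne, hβp⟩ := Finset.mem_erase.mp hβ
      exact Finset.mem_erase.mpr ⟨D.sig_ne hα hβp hne, D.sig_mem hα hβp⟩
    · intro β hβ
      exact D.sig_sig hα (Finset.mem_erase.mp hβ).2
    · intro β hβ
      exact D.sig_sig hα (Finset.mem_erase.mp hβ).2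
    · intro β hβ
      obtain ⟨hne, hβp⟩ := Finset.mem_erase.mp hβ
      rw [D.sig_sig hα hβp]
  -- main reduction
  have hsplit : D.coLen ν - D.coLen μ
      = (|α ν| - |α μ|) + ∑ β ∈ D.pos.erase α, (|β ν| - |β μ|) := by
    unfold coLen
    rw [← Finset.sum_sub_distrib, ← Finset.sum_erase_add _ _ hα]
    ring
  have hGnonneg : ∀ β ∈ D.pos.erase α,
      0 ≤ (|β ν| - |β μ|) + (|(D.sig α β) ν| - |(D.sig α β) μ|) := by
    intro β hβS
    rw [key β hβS]
    have := (absF (β ν) (β (D.coroot α)) (α ν) k hk0 hkc).1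
    linarith
  have hGzero_iff : ∀ β ∈ D.pos.erase α,
      ((|β ν| - |β μ|) + (|(D.sig α β) ν| - |(D.sig α β) μ|) = 0
        ↔ 0 ≤ β ν * (β ν - β (D.coroot α) * α ν)) := by
    intro β hβS
    rw [key β hβS]
    have := (absF (β ν) (β (D.coroot α)) (α ν) k hk0 hkc).2
    constructor
    · intro h
      exact this.mp (by linarith)
    · intro h
      have := this.mpr h
      linarith
  constructor
  · intro heq
    intro β hβp hne
    have hsum0 : ∑ β ∈ D.pos.erase α, (|β ν| - |β μ|) = 0 := by
      rw [hαterm] at hsplit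
      linarith
    have hGsum : ∑ β ∈ D.pos.erase α,
        ((|β ν| - |β μ|) + (|(D.sig α β) ν| - |(D.sig α β) μ|)) = 0 := by
      rw [Finset.sum_add_distrib, ← hreindex, hsum0]
      ring
    have hall := (Finset.sum_eq_zero_iff_of_nonneg hGnonneg).mp hGsum
    have hβS : β ∈ D.pos.erase α := Finset.mem_erase.mpr ⟨hne, hβp⟩
    exact (hGzero_iff β hβS).mp (hall β hβS)
  · intro hC
    have hall : ∀ β ∈ D.pos.erase α,
        (|β ν| - |β μ|) + (|(D.sig α β) ν| - |(D.sig α β) μ|) = 0 := by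
      intro β hβS
      obtain ⟨hne, hβp⟩ := Finset.mem_erase.mp hβS
      exact (hGzero_iff β hβS).mpr (hC β hβp hne)
    have hGsum : ∑ β ∈ D.pos.erase α,
        ((|β ν| - |β μ|) + (|(D.sig α β) ν| - |(D.sig α β) μ|)) = 0 :=
      Finset.sum_eq_zero hall
    rw [Finset.sum_add_distrib, ← hreindex] at hGsum
    have hsum0 : ∑ β ∈ D.pos.erase α, (|β ν| - |β μ|) = 0 := by linarith
    have := hsplit
    rw [hsum0, hαterm] at this
    linarith

end RootSystemData
/-- With `α ∈ Σ⁺`, `⟨ν,α⟩ > 0`, `0 ≤ k ≤ ⟨ν,α⟩`, `μ = ν − k·α̌`,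
equality `ℓ(ν) = ℓ(μ) + 2·min{k, ⟨ν,α⟩−k}` holds iff `k = 0`, or `k = ⟨ν,α⟩`, or there
is `w` in the Weyl group with `w(ν)` dominant and `w(α)` a simple root. -/
theorem coLen_equality_iff (D : RootSystemData V) (ν : V) (α : Module.Dual ℝ V)
    (hα : α ∈ D.pos) (hν : 0 < α ν) (k : ℤ) (hk0 : 0 ≤ k) (hk : (k : ℝ) ≤ α ν) :
    D.coLen ν = D.coLen (ν - (k : ℝ) • D.coroot α) + 2 * min (k : ℝ) (α ν - (k : ℝ)) ↔
      (k = 0 ∨ (k : ℝ) = α ν ∨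
        ∃ w ∈ D.weylGroup, D.IsDominant (w ν) ∧ D.IsSimpleRoot (dualAct w α)) := by
  by_cases hk0' : k = 0
  · subst hk0'
    constructor
    · intro _; exact Or.inl rfl
    · intro _
      simp only [Int.cast_zero, zero_smul, sub_zero]
      rw [min_eq_left (le_of_lt hν)]
      ring
  by_cases hkc' : (k : ℝ) = α ν
  · constructor
    · intro _; exact Or.inr (Or.inl hkc')
    · intro _
      rw [hkc']
      have hμ : ν - α ν • D.coroot α = D.sRef α (D.pos_subset hα) ν := by
        rw [D.sRef_apply]
      rw [hμ, D.coLen_sRef (D.pos_subset hα) hα ν]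
      rw [show min (α ν) (α ν - α ν) = 0 by rw [sub_self]; exact min_eq_right (le_of_lt hν)]
      ring
  · have hk0r : 0 < (k : ℝ) := by
      have : 0 < k := lt_of_le_of_ne hk0 (Ne.symm hk0')
      exact_mod_cast this
    have hkcr : (k : ℝ) < α ν := lt_of_le_of_ne hk hkc'
    constructor
    · intro heq
      have hC := (D.coLen_eq_iff_Ccond hα hν hk0r hkcr).mp heq
      exact Or.inr (Or.inr (D.exists_w_of_Ccond ν α hα hν hC))
    · rintro (h | h | hex)
      · exact absurd h hk0'
      · exact absurd h hkc'
      · exact (D.coLen_eq_iff_Ccond hα hν hk0r hkcr).mpr (D.Ccond_of_exists hα hν hex)
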